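/- Simulation of large generative queries by size-r queries (core identity of Proposition 2): Let U be a nonempty finite set of statements, S a nonempty finite set of agents, u : S → U → ℝ, and r an integer with 1 ≤ r ≤ |S|. Then max_{α ∈ U} (the r-th largest value of i ↦ u(i)(α) on S) = max over subsets T ⊆ S with |T| = r of (max_{α ∈ U} min_{i ∈ T} u(i)(α)). -/

import Mathlib

/-- The `r`-th largest element (1-indexed) of a multiset of reals: the `r`-th entry of a
non-increasing enumeration, obtained as entry `card - r` (0-indexed) of the ascending
sort. -/
noncomputable def rthLargest (s : Multiset ℝ) (r : ℕ) : ℝ :=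
  (s.sort (· ≤ ·)).getD (Multiset.card s - r) 0

/-- Simulation of large generative queries by size-`r` queries (core identity of
Proposition 2): for a nonempty finite universe `U` of statements, a nonempty finite set
`S` of agents, utilities `u : ι → U → ℝ`, and `1 ≤ r ≤ |S|`,
`max_{α ∈ U} (r-th largest of i ↦ u i α on S)`
equals `max_{T ⊆ S, |T| = r} max_{α ∈ U} min_{i ∈ T} u i α`. -/
lemma exists_preimage_of_le_map {α β : Type*} (f : α → β) :
    ∀ (t : Multiset β) (s : Multiset α), t ≤ s.map f → ∃ u ≤ s, u.map f = t := by
  classical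
  intro t
  induction t using Multiset.induction with
  | empty => intro s _; exact ⟨0, Multiset.zero_le _, rfl⟩
  | cons b t ih =>
    intro s h
    have hb : b ∈ s.map f := Multiset.mem_of_le h (Multiset.mem_cons_self _ _)
    obtain ⟨a, ha, rfl⟩ := Multiset.mem_map.mp hb
    have hsplit : s.map f = f a ::ₘ (s.erase a).map f := by
      conv_lhs => rw [← Multiset.cons_erase ha]
      rw [Multiset.map_cons]
    have ht : t ≤ (s.erase a).map f := by
      have h2 := Multiset.erase_le_erase (f a) h
      rwa [Multiset.erase_cons_head, hsplit, Multiset.erase_cons_head] at h2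
    obtain ⟨u, hu, hmap⟩ := ih (s.erase a) ht
    refine ⟨a ::ₘ u, ?_, by rw [Multiset.map_cons, hmap]⟩
    calc a ::ₘ u ≤ a ::ₘ s.erase a := Multiset.cons_le_cons _ hu
      _ = s := Multiset.cons_erase ha

lemma sorted_le_getElem {l : List ℝ} (hs : l.Pairwise (· ≤ ·)) {i j : ℕ}
    (hij : i ≤ j) (hj : j < l.length) : l[i]'(lt_of_le_of_lt hij hj) ≤ l[j] := by
  rcases eq_or_lt_of_le hij with rfl | h
  · exact le_refl _
  · exact List.pairwise_iff_getElem.mp hs i j _ hj h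

lemma exists_subset_rthLargest_le {ι : Type*} (S : Finset ι) (f : ι → ℝ) (r : ℕ)
    (hr : 1 ≤ r) (hrS : r ≤ S.card) :
    ∃ T ∈ S.powersetCard r, ∀ i ∈ T, rthLargest (S.val.map f) r ≤ f i := by
  set l := (S.val.map f).sort (· ≤ ·) with hl
  have hlen : l.length = S.card := by
    rw [hl, Multiset.length_sort, Multiset.card_map]; rfl
  set k := S.card - r with hkdef
  have hk : k < l.length := by omega
  have hval : rthLargest (S.val.map f) r = l[k] := by
    rw [rthLargest, Multiset.card_map]
    exact List.getD_eq_getElem _ _ hk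
  have hsorted : l.Pairwise (· ≤ ·) := Multiset.pairwise_sort _ _
  have hdrop : (↑(l.drop k) : Multiset ℝ) ≤ S.val.map f := by
    have h1 : (↑(l.drop k) : Multiset ℝ) ≤ ↑l :=
      Multiset.coe_le.mpr (l.drop_sublist k).subperm
    rwa [hl, Multiset.sort_eq] at h1
  obtain ⟨t, hts, htmap⟩ := exists_preimage_of_le_map f _ _ hdrop
  have hnodup : t.Nodup := Multiset.nodup_of_le hts S.nodup
  refine ⟨⟨t, hnodup⟩, ?_, ?_⟩
  · rw [Finset.mem_powersetCard]
    refine ⟨fun i hi => Multiset.subset_of_le hts hi, ?_⟩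
    have : Multiset.card (t.map f) = (l.drop k).length := by
      rw [htmap]; rfl
    rw [Multiset.card_map] at this
    show Multiset.card t = r
    rw [this, List.length_drop, hlen]; omega
  · intro i hi
    have hfi : f i ∈ (l.drop k) := by
      have : f i ∈ t.map f := Multiset.mem_map_of_mem f hi
      rwa [htmap, Multiset.mem_coe] at this
    obtain ⟨j, hj, hje⟩ := List.mem_iff_getElem.mp hfi
    rw [List.getElem_drop] at hje
    rw [hval, ← hje]
    exact sorted_le_getElem hsorted (by omega) (by rw [List.length_drop] at hj; omega)

lemma exists_le_rthLargest {ι : Type*} (S : Finset ι) (f : ι → ℝ) (r : ℕ)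
    (hr : 1 ≤ r) (hrS : r ≤ S.card) (T : Finset ι) (hT : T ∈ S.powersetCard r) :
    ∃ i ∈ T, f i ≤ rthLargest (S.val.map f) r := by
  set l := (S.val.map f).sort (· ≤ ·) with hl
  have hlen : l.length = S.card := by
    rw [hl, Multiset.length_sort, Multiset.card_map]; rfl
  set k := S.card - r with hkdef
  have hk : k < l.length := by omega
  have hval : rthLargest (S.val.map f) r = l[k] := by
    rw [rthLargest, Multiset.card_map]
    exact List.getD_eq_getElem _ _ hk
  have hsorted : l.Pairwise (· ≤ ·) := Multiset.pairwise_sort _ _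
  by_contra hcon
  push_neg at hcon
  rw [hval] at hcon
  obtain ⟨hTS, hTcard⟩ := Finset.mem_powersetCard.mp hT
  set x := l[k] with hx
  set ltl := (T.val.map f).sort (· ≤ ·) with hltl
  have hltlen : ltl.length = r := by
    rw [hltl, Multiset.length_sort, Multiset.card_map]; exact hTcard
  have hsub : ltl.Subperm l := by
    rw [← Multiset.coe_le]
    rw [hltl, hl, Multiset.sort_eq, Multiset.sort_eq]
    exact Multiset.map_le_map (Finset.val_le_iff.mpr hTS)
  set q : ℝ → Bool := fun y => decide (y ≤ x) with hq
  have count1 : k + 1 ≤ l.countP q := by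
    have hsl : (l.take (k+1)).countP q ≤ l.countP q :=
      List.Sublist.countP_le (l.take_sublist (k+1))
    have htake : (l.take (k+1)).countP q = (l.take (k+1)).length := by
      rw [List.countP_eq_length]
      intro a ha
      obtain ⟨j, hj, hje⟩ := List.mem_iff_getElem.mp ha
      rw [List.getElem_take] at hje
      have hjk : j ≤ k := by
        rw [List.length_take] at hj; omega
      rw [hq]
      simp only [decide_eq_true_eq]
      rw [← hje, hx]
      exact sorted_le_getElem hsorted hjk hk
    rw [htake, List.length_take] at hsl
    omega
  have count2 : r ≤ l.countP (fun a => ¬ q a) := by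
    have h2 : ltl.countP (fun a => ¬ q a) = ltl.length := by
      rw [List.countP_eq_length]
      intro a ha
      have : a ∈ T.val.map f := by
        rw [← Multiset.mem_coe, hltl, Multiset.sort_eq] at ha
        exact ha
      obtain ⟨i, hi, rfl⟩ := Multiset.mem_map.mp this
      have := hcon i hi
      simp [hq]
      linarith
    have := hsub.countP_le (fun a => ¬ q a)
    omega
  have := List.length_eq_countP_add_countP q (l := l)
  omega


theorem gen_query_simulation {U ι : Type*} [Fintype U] [Nonempty U]
    (S : Finset ι) (hS : S.Nonempty) (u : ι → U → ℝ)
    (r : ℕ) (hr : 1 ≤ r) (hrS : r ≤ S.card) :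
    Finset.univ.sup' Finset.univ_nonempty
        (fun a : U => rthLargest (S.val.map fun i => u i a) r) =
      (S.powersetCard r).attach.sup'
        (Finset.attach_nonempty_iff.mpr (Finset.powersetCard_nonempty.mpr hrS))
        (fun T => Finset.univ.sup' Finset.univ_nonempty (fun a : U =>
          T.1.inf'
            (Finset.card_pos.mp
              (by rw [(Finset.mem_powersetCard.mp T.2).2]; exact hr))
            (fun i => u i a))) := by
  apply le_antisymm
  · apply Finset.sup'_le
    intro a _
    obtain ⟨T, hT, hle⟩ := exists_subset_rthLargest_le S (fun i => u i a) r hr hrS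
    have hTne : T.Nonempty := Finset.card_pos.mp
      (by rw [(Finset.mem_powersetCard.mp hT).2]; exact hr)
    refine le_trans ?_ (Finset.le_sup'
      (fun T : {x // x ∈ S.powersetCard r} =>
        Finset.univ.sup' Finset.univ_nonempty (fun a : U =>
          T.1.inf'
            (Finset.card_pos.mp
              (by rw [(Finset.mem_powersetCard.mp T.2).2]; exact hr))
            (fun i => u i a)))
      (Finset.mem_attach _ ⟨T, hT⟩))
    refine le_trans ?_ (Finset.le_sup' _ (Finset.mem_univ a))
    exact Finset.le_inf' _ _ hle
  · refine Finset.sup'_le _ _ ?_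
    rintro ⟨T, hT⟩ _
    refine Finset.sup'_le _ _ ?_
    intro a _
    obtain ⟨i, hi, hle⟩ := exists_le_rthLargest S (fun i => u i a) r hr hrS T hT
    refine le_trans (Finset.inf'_le _ hi) (le_trans hle ?_)
    exact Finset.le_sup' (fun a : U => rthLargest (S.val.map fun i => u i a) r)
      (Finset.mem_univ a)
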